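/- For the multiple-choice knapsack problem, the optimal value of its LP relaxation minus the optimal value of the integer problem is at most ΔV_max, where ΔV_max is the maximum, over all groups i and all pairs of adjacent upper-hull vertices of that group's cost–value point set, of the value difference between the adjacent vertices (taken as 0 for groups whose hull has a single vertex). -/
import Mathlib


/-- Additive integrality-gap bound for MCKP: the LP optimum exceeds the integer
optimum by at most the maximal adjacent value jump `ΔV` on the groups'
upper hulls, given that some optimal LP solution mixes at most one group
between two adjacent hull vertices (both of which are menu points). -/
theorem stmt10 (n m : ℕ) (hn : 1 ≤ n) (hm : 1 ≤ m)
    (v c : Fin n → Fin m → ℝ) (C : ℝ)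
    (hc : ∀ i j, 0 ≤ c i j)
    (OPT_LP OPT_IP : ℝ)
    -- OPT_IP is the greatest value of an integer-feasible selection
    (hIP : IsGreatest {y : ℝ | ∃ jsel : Fin n → Fin m,
      (∑ i, c i (jsel i)) ≤ C ∧ y = ∑ i, v i (jsel i)} OPT_IP)
    -- OPT_LP is the greatest value of an LP-feasible solution
    (hLP : IsGreatest {y : ℝ | ∃ z : Fin n → Fin m → ℝ,
      (∀ i j, 0 ≤ z i j) ∧ (∀ i, (∑ j, z i j) = 1) ∧
      (∑ i, ∑ j, c i j * z i j) ≤ C ∧ y = ∑ i, ∑ j, v i j * z i j} OPT_LP)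
    (ΔV : ℝ) (hΔV : 0 ≤ ΔV)
    -- structural hypothesis (established separately): an optimal LP solution
    -- selects a single option in every group except possibly one group i⋆,
    -- which mixes two adjacent upper-hull vertices — menu points
    -- (ck, vk), (ck1, vk1) with ck ≤ ck1 and value jump vk1 − vk ≤ ΔV.
    (hmix : ∃ (istar : Fin n) (jsel : Fin n → Fin m) (jk jk1 : Fin m) (α : ℝ),
      α ∈ Set.Icc (0 : ℝ) 1 ∧
      c istar jk ≤ c istar jk1 ∧ v istar jk ≤ v istar jk1 ∧
      v istar jk1 - v istar jk ≤ ΔV ∧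
      (∑ i ∈ Finset.univ.erase istar, c i (jsel i))
        + ((1 - α) * c istar jk + α * c istar jk1) ≤ C ∧
      (∑ i ∈ Finset.univ.erase istar, v i (jsel i))
        + ((1 - α) * v istar jk + α * v istar jk1) = OPT_LP) :
    OPT_LP - OPT_IP ≤ ΔV := by
  obtain ⟨istar, jsel, jk, jk1, α, ⟨hα0, hα1⟩, hck, hvk, hΔ, hcost, hval⟩ := hmix
  set jsel' : Fin n → Fin m := Function.update jsel istar jk with hj
  have herase : ∀ (f : Fin n → ℝ),
      ∑ i ∈ Finset.univ.erase istar, f i = (∑ i, f i) - f istar := by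
    intro f
    rw [Finset.sum_erase_eq_sub (Finset.mem_univ istar)]
  have hceq : ∑ i, c i (jsel' i)
      = (∑ i ∈ Finset.univ.erase istar, c i (jsel i)) + c istar jk := by
    rw [← Finset.add_sum_erase _ _ (Finset.mem_univ istar)]
    have h1 : jsel' istar = jk := Function.update_self _ _ _
    have h2 : ∀ i ∈ Finset.univ.erase istar, c i (jsel' i) = c i (jsel i) := by
      intro i hi
      have := Finset.ne_of_mem_erase hi
      simp [hj, Function.update_of_ne this]
    rw [h1, Finset.sum_congr rfl h2, add_comm]
  have hveq : ∑ i, v i (jsel' i)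
      = (∑ i ∈ Finset.univ.erase istar, v i (jsel i)) + v istar jk := by
    rw [← Finset.add_sum_erase _ _ (Finset.mem_univ istar)]
    have h1 : jsel' istar = jk := Function.update_self _ _ _
    have h2 : ∀ i ∈ Finset.univ.erase istar, v i (jsel' i) = v i (jsel i) := by
      intro i hi
      have := Finset.ne_of_mem_erase hi
      simp [hj, Function.update_of_ne this]
    rw [h1, Finset.sum_congr rfl h2, add_comm]
  have hcostle : ∑ i, c i (jsel' i) ≤ C := by
    rw [hceq]
    refine le_trans ?_ hcost
    have : c istar jk ≤ (1 - α) * c istar jk + α * c istar jk1 := by nlinarith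
    linarith
  have hmem : ∑ i, v i (jsel' i) ∈ {y : ℝ | ∃ js : Fin n → Fin m,
      (∑ i, c i (js i)) ≤ C ∧ y = ∑ i, v i (js i)} := ⟨jsel', hcostle, rfl⟩
  have hle := hIP.2 hmem
  have hvle : OPT_LP ≤ ∑ i, v i (jsel' i) + ΔV := by
    rw [hveq, ← hval]
    have : (1 - α) * v istar jk + α * v istar jk1 ≤ v istar jk + ΔV := by nlinarith
    linarith
  linarith
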